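/- arXiv:0911.2803 — 2 statements merged into one kernel-verified Lean document; each statement's English description precedes it below -/
import Mathlib

section
/- Let φ_σ(x) = exp(-|x/σ|²) on ℝ^d with σ > 0 fixed, and let B = B(0,R) be the ball of radius R centered at the origin. Then there exist constants C, c > 0 depending only on R, σ, d such that for all h with 0 < h < π/R, the quantity K_h := Σ_{β ∈ (2π/h)ℤ^d \ {0}} sup_{ξ ∈ B} φ̂_σ(ξ+β)/φ̂_σ(ξ) satisfies K_h ≤ C e^{-c/h²}. -/
open Real

/-- The lattice point of `ℤ^d` viewed inside Euclidean space `ℝ^d`. -/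
noncomputable def latticeVec (d : ℕ) (m : Fin d → ℤ) : EuclideanSpace ℝ (Fin d) :=
  (EuclideanSpace.equiv (Fin d) ℝ).symm (fun i => (m i : ℝ))

/-- The Fourier transform of the Gaussian `φ_σ(x) = exp(-|x/σ|²)`:
`φ̂_σ(ξ) = (σ√π)^d exp(-|σξ/2|²)`. -/
noncomputable def gaussianFT (d : ℕ) (σ : ℝ) (ξ : EuclideanSpace ℝ (Fin d)) : ℝ :=
  (σ * Real.sqrt π) ^ d * Real.exp (-‖(σ / 2) • ξ‖ ^ 2)

lemma aux_summable_int (b : ℝ) (hb : 0 < b) :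
    Summable fun n : ℤ => Real.exp (-b * (n : ℝ) ^ 2) := by
  have hnat : Summable fun n : ℕ => Real.exp (-b * (n : ℝ) ^ 2) := by
    refine Summable.of_nonneg_of_le (fun n => (Real.exp_pos _).le) (fun n => ?_)
      (summable_geometric_of_lt_one (Real.exp_pos (-b)).le
        (Real.exp_lt_one_iff.mpr (by linarith)))
    rw [← Real.exp_nat_mul]
    apply Real.exp_le_exp.2
    have h1 : (n : ℝ) ≤ (n : ℝ) ^ 2 := by
      exact_mod_cast Nat.le_self_pow two_ne_zero n
    nlinarith
  refine Summable.of_nat_of_neg ?_ ?_ <;> simpa using hnat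

lemma aux_summable_pi (d : ℕ) (b : ℝ) (hb : 0 < b) :
    Summable fun m : Fin d → ℤ => Real.exp (-b * ∑ i, ((m i : ℝ)) ^ 2) := by
  induction d with
  | zero => exact .of_finite
  | succ n ih =>
    have h2 := (aux_summable_int b hb).mul_of_nonneg ih
      (fun _ => (Real.exp_pos _).le) (fun _ => (Real.exp_pos _).le)
    rw [← (Fin.consEquiv (fun _ : Fin (n+1) => ℤ)).summable_iff]
    convert h2 using 2 with p
    simp only [Function.comp_apply, Fin.consEquiv_apply, Fin.sum_univ_succ, ← Real.exp_add,
      Fin.cons_zero, Fin.cons_succ, mul_add]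

lemma latticeVec_norm_sq (d : ℕ) (m : Fin d → ℤ) :
    ‖latticeVec d m‖ ^ 2 = ∑ i, ((m i : ℝ)) ^ 2 := by
  rw [EuclideanSpace.norm_eq, sq_sqrt (by positivity)]
  simp [latticeVec, sq_abs]

lemma key_arith (σ R N s u v P : ℝ) (hσ : 0 < σ) (hR : 0 < R)
    (hN1 : 1 ≤ N) (hs0 : 0 ≤ s) (hs2 : s ^ 2 = N) (hRP : R < P)
    (huR : u ≤ R) (hv : 2 * P * s - R ≤ v) (hv0 : 0 ≤ 2 * P * s - R) (hu0 : 0 ≤ u) :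
    (σ/2)^2 * u^2 - (σ/2)^2 * v^2
      ≤ σ^2 * R^2 / 2 - (σ^2 * R^2 / 4) * N - (σ^2 / 4) * P^2 := by
  have h1 : (2*P*s - R)^2 ≤ v^2 := pow_le_pow_left₀ hv0 hv 2
  have h2 : u^2 ≤ R^2 := by nlinarith
  have hP : 0 < P := lt_trans hR hRP
  have hs1 : 1 ≤ s := by nlinarith
  have h3 : 2*R*(2*P*s) ≤ (2*P*s)^2/2 + 2*R^2 := by nlinarith [sq_nonneg (2*P*s - 2*R)]
  have h4 : (2*P*s)^2 = 4*P^2*N := by nlinarith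
  have h5 : R^2*N + P^2 ≤ 2*P^2*N := by nlinarith [mul_lt_mul_of_pos_right (mul_lt_mul'' hRP hRP hR.le hR.le) (lt_of_lt_of_le one_pos hN1), sq_nonneg P]
  have h7 : u^2 - v^2 ≤ 2*R^2 - R^2*N - P^2 := by nlinarith
  calc (σ/2)^2 * u^2 - (σ/2)^2 * v^2 = (σ/2)^2 * (u^2 - v^2) := by ring
    _ ≤ (σ/2)^2 * (2*R^2 - R^2*N - P^2) :=
        mul_le_mul_of_nonneg_left h7 (sq_nonneg _)
    _ = σ^2 * R^2 / 2 - (σ^2 * R^2 / 4) * N - (σ^2 / 4) * P^2 := by ring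

/-- For `0 < h < π/R`, the quantity
`K_h = Σ_{β ∈ (2π/h)ℤ^d \ {0}} sup_{ξ ∈ B(0,R)} φ̂_σ(ξ+β)/φ̂_σ(ξ)`
satisfies `K_h ≤ C e^{-c/h²}`, with `C, c > 0` depending only on `R, σ, d`. -/
theorem gaussian_lattice_tail_bound (d : ℕ) (σ R : ℝ) (hσ : 0 < σ) (hR : 0 < R) :
    ∃ C c : ℝ, 0 < C ∧ 0 < c ∧ ∀ h : ℝ, 0 < h → h < π / R →
      (∑' β : {m : Fin d → ℤ // m ≠ 0},
          ⨆ ξ : Metric.closedBall (0 : EuclideanSpace ℝ (Fin d)) R,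
            gaussianFT d σ ((ξ : EuclideanSpace ℝ (Fin d)) +
                (2 * π / h) • latticeVec d (β : Fin d → ℤ)) /
              gaussianFT d σ ξ)
        ≤ C * Real.exp (-c / h ^ 2) := by
  haveI : Nonempty (Metric.closedBall (0 : EuclideanSpace ℝ (Fin d)) R) :=
    (Metric.nonempty_closedBall.mpr hR.le).to_subtype
  have hπ := Real.pi_pos
  set c : ℝ := σ ^ 2 * π ^ 2 / 4 with hc
  have hcpos : 0 < c := by positivity
  set b : ℝ := σ ^ 2 * R ^ 2 / 4 with hb
  have hbpos : 0 < b := by positivity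
  set g : {m : Fin d → ℤ // m ≠ 0} → ℝ :=
    fun β => Real.exp (σ ^ 2 * R ^ 2 / 2) * Real.exp (-b * ∑ i, ((β.1 i : ℝ)) ^ 2) with hg
  have hgsum : Summable g := ((aux_summable_pi d b hbpos).subtype _).mul_left _
  refine ⟨(∑' β, g β) + 1, c, ?_, hcpos, ?_⟩
  · have h0 : 0 ≤ ∑' β, g β :=
      tsum_nonneg fun β => mul_nonneg (Real.exp_pos _).le (Real.exp_pos _).le
    linarith
  intro h hh hhR
  have hRh : R < π / h := by
    rw [lt_div_iff₀ hh]
    calc R * h < R * (π / R) := by exact mul_lt_mul_of_pos_left hhR hR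
    _ = π := by field_simp
  have key : ∀ β : {m : Fin d → ℤ // m ≠ 0},
      (⨆ ξ : Metric.closedBall (0 : EuclideanSpace ℝ (Fin d)) R,
          gaussianFT d σ ((ξ : EuclideanSpace ℝ (Fin d)) +
              (2 * π / h) • latticeVec d (β : Fin d → ℤ)) /
            gaussianFT d σ ξ) ≤ g β * Real.exp (-c / h ^ 2) := by
    intro β
    apply ciSup_le
    intro ξ
    have hgβ : g β = Real.exp (σ ^ 2 * R ^ 2 / 2) *
        Real.exp (-b * ∑ i, (((β : Fin d → ℤ) i : ℝ)) ^ 2) := rfl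
    rw [hgβ]
    obtain ⟨m, hmne⟩ := β
    simp only
    set N : ℝ := ∑ i, ((m i : ℝ)) ^ 2 with hN
    have hN1 : 1 ≤ N := by
      obtain ⟨i, hi⟩ := Function.ne_iff.mp hmne
      have hi' : m i ≠ 0 := by simpa using hi
      have h1 : (1 : ℝ) ≤ ((m i : ℝ)) ^ 2 := by
        have : (1 : ℤ) ≤ (m i) ^ 2 := by
          rcases lt_or_gt_of_ne hi' with h' | h' <;> nlinarith
        exact_mod_cast this
      calc (1 : ℝ) ≤ ((m i : ℝ)) ^ 2 := h1
      _ ≤ N := Finset.single_le_sum (f := fun j => ((m j : ℝ)) ^ 2)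
            (fun j _ => sq_nonneg _) (Finset.mem_univ i)
    set s : ℝ := ‖latticeVec d m‖ with hs
    have hs2 : s ^ 2 = N := latticeVec_norm_sq d m
    have hs0 : 0 ≤ s := norm_nonneg _
    have hs1 : 1 ≤ s := by nlinarith
    set w : EuclideanSpace ℝ (Fin d) := (2 * π / h) • latticeVec d m with hw
    have hwn : ‖w‖ = 2 * (π / h) * s := by
      rw [hw, norm_smul, Real.norm_eq_abs, abs_of_pos (by positivity : (0:ℝ) < 2 * π / h)]
      rw [← hs]; ring
    have hξR : ‖(ξ : EuclideanSpace ℝ (Fin d))‖ ≤ R := by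
      have := ξ.2
      rwa [Metric.mem_closedBall, dist_zero_right] at this
    have hlow : 2 * (π / h) * s - R ≤ ‖(ξ : EuclideanSpace ℝ (Fin d)) + w‖ := by
      have h1 : ‖w‖ ≤ ‖(ξ : EuclideanSpace ℝ (Fin d)) + w‖ + ‖(ξ : EuclideanSpace ℝ (Fin d))‖ := by
        calc ‖w‖ = ‖((ξ : EuclideanSpace ℝ (Fin d)) + w) + -(ξ : EuclideanSpace ℝ (Fin d))‖ := by
              congr 1; abel
        _ ≤ ‖(ξ : EuclideanSpace ℝ (Fin d)) + w‖ + ‖-(ξ : EuclideanSpace ℝ (Fin d))‖ :=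
              norm_add_le _ _
        _ = _ := by rw [norm_neg]
      rw [hwn] at h1; linarith
    have htsR : 0 ≤ 2 * (π / h) * s - R := by nlinarith [div_pos hπ hh]
    have hApos : (0:ℝ) < (σ * Real.sqrt π) ^ d :=
      pow_pos (mul_pos hσ (Real.sqrt_pos.mpr hπ)) d
    have hratio : gaussianFT d σ ((ξ : EuclideanSpace ℝ (Fin d)) + w) / gaussianFT d σ ξ =
        Real.exp ((σ/2)^2 * ‖(ξ : EuclideanSpace ℝ (Fin d))‖^2
          - (σ/2)^2 * ‖(ξ : EuclideanSpace ℝ (Fin d)) + w‖^2) := by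
      rw [gaussianFT, gaussianFT, mul_div_mul_left _ _ hApos.ne', ← Real.exp_sub]
      congr 1
      rw [norm_smul, norm_smul, Real.norm_eq_abs, abs_of_pos (by positivity : (0:ℝ) < σ/2)]
      ring
    rw [hratio, ← Real.exp_add, ← Real.exp_add]
    apply Real.exp_le_exp.2
    have harith := key_arith σ R N s ‖(ξ : EuclideanSpace ℝ (Fin d))‖
      ‖(ξ : EuclideanSpace ℝ (Fin d)) + w‖ (π / h) hσ hR hN1 hs0 hs2 hRh hξR hlow htsR
      (norm_nonneg _)
    have heq : σ^2 * R^2 / 2 - (σ^2 * R^2 / 4) * N - (σ^2 / 4) * (π / h)^2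
        = σ ^ 2 * R ^ 2 / 2 + -b * N + -c / h ^ 2 := by
      rw [hb, hc, div_pow]; ring
    exact harith.trans heq.le
  have hnonneg : ∀ β : {m : Fin d → ℤ // m ≠ 0},
      0 ≤ ⨆ ξ : Metric.closedBall (0 : EuclideanSpace ℝ (Fin d)) R,
          gaussianFT d σ ((ξ : EuclideanSpace ℝ (Fin d)) +
              (2 * π / h) • latticeVec d (β : Fin d → ℤ)) / gaussianFT d σ ξ := by
    intro β
    apply Real.iSup_nonneg
    intro ξ
    apply div_nonneg
    · exact mul_nonneg (pow_nonneg (mul_nonneg hσ.le (Real.sqrt_nonneg _)) d) (Real.exp_pos _).le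
    · exact mul_nonneg (pow_nonneg (mul_nonneg hσ.le (Real.sqrt_nonneg _)) d) (Real.exp_pos _).le
  have hsum2 : Summable fun β => g β * Real.exp (-c / h ^ 2) := hgsum.mul_right _
  calc (∑' β : {m : Fin d → ℤ // m ≠ 0}, _)
      ≤ ∑' β, g β * Real.exp (-c / h ^ 2) :=
        Summable.tsum_le_tsum key (Summable.of_nonneg_of_le hnonneg key hsum2) hsum2
    _ = (∑' β, g β) * Real.exp (-c / h ^ 2) := tsum_mul_right
    _ ≤ ((∑' β, g β) + 1) * Real.exp (-c / h ^ 2) := by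
        apply mul_le_mul_of_nonneg_right (by linarith) (Real.exp_pos _).le
end

section
/- Let 1/τ = s/d with s ≥ 0, 0 < q ≤ min(τ,1), and let (ψ_I)_{I∈D} be functions satisfying |ψ_I(x)|^{τ'} ≤ C(1+|x-c(I)|/ℓ(I))^{-(d+1)} for the conjugate exponent τ' of τ > 1. If (f_I)_{I∈D} satisfies |f|_{B^s_{τ,q}} := (Σ_{j∈ℤ}(Σ_{I∈D_j}|f_I|^τ)^{q/τ})^{1/q} < ∞, then Σ_{j∈ℤ} Σ_{I∈D_j} |f_I||ψ_I(x)| ≤ C' |f|_{B^s_{τ,q}} for all x, where C' depends only on C, d, τ, q; in particular the series Σ_I f_I ψ_I converges absolutely and uniformly. -/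
open scoped ENNReal

/-- The Besov seminorm `|f|_{B^s_{τ,q}} = (Σ_j (Σ_{I∈D_j}|f_I|^τ)^{q/τ})^{1/q}`. -/
noncomputable def besovNorm (d : ℕ) (τ q : ℝ) (f : ℤ × (Fin d → ℤ) → ℂ) : ℝ≥0∞ :=
  (∑' j : ℤ, ((∑' m : Fin d → ℤ, ENNReal.ofReal ‖f (j, m)‖ ^ τ) ^ (1 / τ)) ^ q) ^ (1 / q)

section Aux

open MeasureTheory

lemma aux_sum_rpow_le {ι : Type*} (s : Finset ι) (a : ι → ℝ≥0∞) {p : ℝ} (hp0 : 0 < p)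
    (hp1 : p ≤ 1) : (∑ i ∈ s, a i) ^ p ≤ ∑ i ∈ s, a i ^ p := by
  induction s using Finset.cons_induction with
  | empty => simp [ENNReal.zero_rpow_of_pos hp0]
  | cons i s hi ih =>
    rw [Finset.sum_cons, Finset.sum_cons]
    exact (ENNReal.rpow_add_le_add_rpow _ _ hp0.le hp1).trans (by gcongr)

lemma aux_tsum_rpow_le {ι : Type*} (a : ι → ℝ≥0∞) {p : ℝ} (hp0 : 0 < p) (hp1 : p ≤ 1) :
    ∑' i, a i ≤ (∑' i, a i ^ p) ^ (1 / p) := by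
  rw [ENNReal.tsum_eq_iSup_sum]
  refine iSup_le fun s => ?_
  rw [one_div, ENNReal.le_rpow_inv_iff hp0]
  exact (aux_sum_rpow_le s a hp0 hp1).trans (ENNReal.sum_le_tsum s)

lemma aux_tsum_pi_prod : ∀ (d : ℕ) (g : Fin d → ℤ → ℝ≥0∞),
    ∑' m : Fin d → ℤ, ∏ i, g i (m i) = ∏ i, ∑' k : ℤ, g i k := by
  intro d
  induction d with
  | zero =>
    intro g
    rw [Finset.univ_eq_empty, Finset.prod_empty]
    rw [tsum_eq_single (fun i => i.elim0) (fun b hb => absurd (Subsingleton.elim b _) hb)]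
    simp
  | succ n ih =>
    intro g
    rw [← (Fin.consEquiv (fun _ : Fin (n+1) => ℤ)).tsum_eq, Fin.prod_univ_succ,
      ENNReal.tsum_prod']
    simp only [Fin.consEquiv_apply]
    simp_rw [Fin.prod_univ_succ, Fin.cons_zero, Fin.cons_succ]
    calc ∑' (a : ℤ) (b : Fin n → ℤ), g 0 a * ∏ i : Fin n, g i.succ (b i)
        = ∑' (a : ℤ), g 0 a * ∑' (b : Fin n → ℤ), ∏ i : Fin n, g i.succ (b i) := by
          simp_rw [ENNReal.tsum_mul_left]
      _ = (∑' (k : ℤ), g 0 k) * ∏ i : Fin n, ∑' (k : ℤ), g i.succ k := by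
          rw [ih fun i => g i.succ, ENNReal.tsum_mul_right]

lemma aux_one_dim {p : ℝ} (hp : 1 < p) : ∃ B : ℝ≥0∞, B ≠ ∞ ∧ ∀ t : ℝ,
    ∑' k : ℤ, ENNReal.ofReal ((1 + |t - (k : ℝ)|) ^ (-p)) ≤ B := by
  set g : ℤ → ℝ := fun k => max 1 |(k : ℝ)| ^ (-p) with hg
  have hgnn : ∀ k, 0 ≤ g k := fun k => Real.rpow_nonneg (le_trans zero_le_one (le_max_left _ _)) _
  have hsum : Summable g := by
    have h1 : Summable fun k : ℤ => |(k : ℝ)| ^ (-p) + if k = 0 then (1:ℝ) else 0 :=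
      (Real.summable_abs_int_rpow hp).add (summable_of_ne_finset_zero (s := {0})
        (fun k hk => by simp [Finset.mem_singleton.not.mp hk]))
    refine h1.of_nonneg_of_le hgnn fun k => ?_
    rcases eq_or_ne k 0 with rfl | hk
    · simp [hg, Real.one_rpow, Real.zero_rpow (by linarith : -p ≠ 0)]
    · have hk1 : (1:ℝ) ≤ |(k:ℝ)| := by
        rcases k.one_le_abs (by exact_mod_cast hk) with h
        exact_mod_cast h
      simp only [hg, max_eq_right hk1, if_neg hk]
      simp
  refine ⟨ENNReal.ofReal (∑' k, g k), ENNReal.ofReal_ne_top, fun t => ?_⟩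
  rw [ENNReal.ofReal_tsum_of_nonneg hgnn hsum]
  have := (Equiv.addRight (⌊t⌋ : ℤ)).tsum_eq
    (f := fun k : ℤ => ENNReal.ofReal ((1 + |t - (k : ℝ)|) ^ (-p)))
  rw [← this]
  refine ENNReal.tsum_le_tsum fun k => ?_
  simp only [Equiv.coe_addRight]
  refine ENNReal.ofReal_le_ofReal ?_
  have hb : max 1 |(k:ℝ)| ≤ 1 + |t - ((k + ⌊t⌋ : ℤ) : ℝ)| := by
    have hfl0 : (0:ℝ) ≤ t - ⌊t⌋ := sub_nonneg.2 (Int.floor_le t)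
    have hfl1 : t - ⌊t⌋ < 1 := by
      have := Int.lt_floor_add_one t; linarith
    refine max_le (le_add_of_nonneg_right (abs_nonneg _)) ?_
    have : |(k:ℝ)| - |t - (⌊t⌋:ℤ)| ≤ |t - ((k + ⌊t⌋ : ℤ) : ℝ)| := by
      have h1 : |(k:ℝ)| = |(t - (⌊t⌋:ℤ)) - (t - ((k + ⌊t⌋:ℤ):ℝ))| := by
        push_cast; ring_nf
      rw [h1]
      have h4 := abs_sub (t - (⌊t⌋:ℤ)) (t - ((k + ⌊t⌋:ℤ):ℝ))
      have h3 := abs_nonneg (t - ((k + ⌊t⌋:ℤ):ℝ))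
      linarith [abs_sub_abs_le_abs_sub (t - (⌊t⌋:ℤ)) (t - ((k + ⌊t⌋:ℤ):ℝ))]
    have h2 : |t - (⌊t⌋:ℤ)| ≤ 1 := by
      rw [abs_of_nonneg (by exact_mod_cast hfl0)]
      push_cast; linarith
    linarith
  calc (1 + |t - ((k + ⌊t⌋ : ℤ) : ℝ)|) ^ (-p) ≤ (max 1 |(k:ℝ)|) ^ (-p) := by
        refine (Real.rpow_le_rpow_iff_of_neg ?_ ?_ (by linarith)).2 hb
        · positivity
        · exact lt_of_lt_of_le one_pos (le_max_left _ _)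
    _ = g k := rfl

lemma aux_coord_le_norm {d : ℕ} (v : EuclideanSpace ℝ (Fin d)) (i : Fin d) : |v i| ≤ ‖v‖ := by
  rw [EuclideanSpace.norm_eq]
  rw [← Real.sqrt_sq_eq_abs]
  refine Real.sqrt_le_sqrt ?_
  exact Finset.single_le_sum (f := fun j => ‖v j‖ ^ 2) (fun j _ => sq_nonneg _)
    (Finset.mem_univ i) |>.trans_eq' (by rw [Real.norm_eq_abs, sq_abs])

lemma aux_prod_bound {d : ℕ} (hd : 1 ≤ d) (y : EuclideanSpace ℝ (Fin d)) (m : Fin d → ℤ) :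
    (1 + ‖y - latticeVec d m‖) ^ (-((d:ℝ) + 1)) ≤
      ∏ i, (1 + |y i - (m i : ℝ)|) ^ (-(((d:ℝ) + 1) / d)) := by
  have hN : (0:ℝ) < 1 + ‖y - latticeVec d m‖ := by positivity
  have hfac : ∀ i, (0:ℝ) < 1 + |y i - (m i : ℝ)| := fun i => by positivity
  have key : ∀ i : Fin d, 1 + |y i - (m i : ℝ)| ≤ 1 + ‖y - latticeVec d m‖ := by
    intro i
    have := aux_coord_le_norm (y - latticeVec d m) i
    have h2 : (y - latticeVec d m) i = y i - (m i : ℝ) := rfl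
    rw [h2] at this; linarith
  have hstep : ∀ i : Fin d, (1 + ‖y - latticeVec d m‖) ^ (-(((d:ℝ) + 1) / d)) ≤
      (1 + |y i - (m i : ℝ)|) ^ (-(((d:ℝ) + 1) / d)) := fun i =>
    (Real.rpow_le_rpow_iff_of_neg hN (hfac i)
      (neg_lt_zero.2 (div_pos (by positivity) (by exact_mod_cast hd : (0:ℝ) < d)))).2 (key i)
  calc (1 + ‖y - latticeVec d m‖) ^ (-((d:ℝ) + 1))
      = ∏ _i : Fin d, (1 + ‖y - latticeVec d m‖) ^ (-(((d:ℝ) + 1) / d)) := by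
        rw [Finset.prod_const, Finset.card_univ, Fintype.card_fin, ← Real.rpow_natCast _ d,
          ← Real.rpow_mul hN.le]
        congr 1
        have hd0 : (d:ℝ) ≠ 0 := by positivity
        field_simp
    _ ≤ ∏ i, (1 + |y i - (m i : ℝ)|) ^ (-(((d:ℝ) + 1) / d)) :=
        Finset.prod_le_prod (fun i _ => (Real.rpow_nonneg hN.le _)) (fun i _ => hstep i)

lemma aux_lattice {d : ℕ} (hd : 1 ≤ d) : ∃ K : ℝ≥0∞, K ≠ ∞ ∧
    ∀ y : EuclideanSpace ℝ (Fin d),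
      ∑' m : Fin d → ℤ, ENNReal.ofReal ((1 + ‖y - latticeVec d m‖) ^ (-((d:ℝ) + 1))) ≤ K := by
  have hd0 : (0:ℝ) < d := by exact_mod_cast hd
  have hp : 1 < ((d:ℝ) + 1) / d := (one_lt_div hd0).2 (by linarith)
  obtain ⟨B, hB, hBle⟩ := aux_one_dim hp
  refine ⟨∏ _i : Fin d, B, ENNReal.prod_ne_top (fun _ _ => hB), fun y => ?_⟩
  calc ∑' m : Fin d → ℤ, ENNReal.ofReal ((1 + ‖y - latticeVec d m‖) ^ (-((d:ℝ) + 1)))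
      ≤ ∑' m : Fin d → ℤ, ∏ i, ENNReal.ofReal ((1 + |y i - (m i : ℝ)|) ^ (-(((d:ℝ) + 1) / d))) := by
        refine ENNReal.tsum_le_tsum fun m => ?_
        rw [← ENNReal.ofReal_prod_of_nonneg (fun i _ => Real.rpow_nonneg (by positivity) _)]
        exact ENNReal.ofReal_le_ofReal (aux_prod_bound hd y m)
    _ = ∏ i : Fin d, ∑' k : ℤ, ENNReal.ofReal ((1 + |y i - (k : ℝ)|) ^ (-(((d:ℝ) + 1) / d))) :=
        aux_tsum_pi_prod d (fun i k => ENNReal.ofReal ((1 + |y i - (k : ℝ)|) ^ (-(((d:ℝ) + 1) / d))))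
    _ ≤ ∏ _i : Fin d, B := Finset.prod_le_prod' fun i _ => hBle (y i)

lemma aux_holder {ι : Type*} [MeasurableSpace ι] [MeasurableSingletonClass ι] [Countable ι]
    (F G : ι → ℝ≥0∞) {p q : ℝ} (hpq : p.HolderConjugate q) :
    ∑' i, F i * G i ≤ (∑' i, F i ^ p) ^ (1/p) * (∑' i, G i ^ q) ^ (1/q) := by
  have h := ENNReal.lintegral_mul_le_Lp_mul_Lq (Measure.count : Measure ι) hpq
    (measurable_of_countable F).aemeasurable (measurable_of_countable G).aemeasurable
  simpa [MeasureTheory.lintegral_count] using h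

lemma aux_scale {d : ℕ} (j : ℤ) (x v : EuclideanSpace ℝ (Fin d)) :
    ‖x - (2:ℝ) ^ j • v‖ / (2:ℝ) ^ j = ‖((2:ℝ) ^ j)⁻¹ • x - v‖ := by
  have hc : (0:ℝ) < (2:ℝ) ^ j := zpow_pos two_pos j
  have h1 : ((2:ℝ) ^ j)⁻¹ • x - v = ((2:ℝ) ^ j)⁻¹ • (x - (2:ℝ) ^ j • v) := by
    rw [smul_sub, inv_smul_smul₀ hc.ne']
  rw [h1, norm_smul, Real.norm_eq_abs, abs_inv, abs_of_pos hc, div_eq_inv_mul]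

end Aux

/-- Besov embedding `B^{d/τ}_{τ,q} ↪ L^∞`: if the wavelets `ψ_I` satisfy
`|ψ_I(x)|^{τ'} ≤ C(1+|x-c(I)|/ℓ(I))^{-(d+1)}` (with `τ'` the conjugate of `τ > 1`) and
`|f|_{B^s_{τ,q}} < ∞` with `1/τ = s/d`, `0 < q ≤ min(τ,1)`, then
`Σ_j Σ_{I∈D_j} |f_I||ψ_I(x)| ≤ C' |f|_{B^s_{τ,q}}` for all `x`, with `C'` depending only on
`C, d, τ, q`; in particular the series converges absolutely. -/
theorem besov_embedding_Linfty (d : ℕ) (hd : 1 ≤ d) (s τ q : ℝ) (hs : 0 ≤ s)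
    (hτ1 : 1 < τ) (hτ : 1 / τ = s / d) (hq0 : 0 < q) (hq : q ≤ min τ 1) (C : ℝ) :
    ∃ C' : ℝ≥0∞, C' ≠ ∞ ∧
      ∀ (ψ : ℤ × (Fin d → ℤ) → EuclideanSpace ℝ (Fin d) → ℂ)
        (f : ℤ × (Fin d → ℤ) → ℂ),
        (∀ (I : ℤ × (Fin d → ℤ)) (x : EuclideanSpace ℝ (Fin d)),
          ‖ψ I x‖ ^ (τ / (τ - 1)) ≤
            C * (1 + ‖x - (2:ℝ) ^ I.1 • latticeVec d I.2‖ / (2:ℝ) ^ I.1) ^ (-((d:ℝ) + 1))) →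
        besovNorm d τ q f ≠ ∞ →
        ∀ x : EuclideanSpace ℝ (Fin d),
          (∑' I : ℤ × (Fin d → ℤ), ENNReal.ofReal (‖f I‖ * ‖ψ I x‖))
            ≤ C' * besovNorm d τ q f := by
  obtain ⟨K, hK, hKle⟩ := aux_lattice hd
  have hpq : τ.HolderConjugate (τ / (τ - 1)) := Real.HolderConjugate.conjExponent hτ1
  set τ' : ℝ := τ / (τ - 1) with hτ'
  refine ⟨(ENNReal.ofReal C * K) ^ (1 / τ'), ?_, ?_⟩
  · exact ENNReal.rpow_ne_top_of_nonneg hpq.symm.one_div_nonneg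
      (ENNReal.mul_ne_top ENNReal.ofReal_ne_top hK)
  intro ψ f hψ _ x
  -- per-level estimate
  have hlevel : ∀ j : ℤ,
      ∑' m : Fin d → ℤ, ENNReal.ofReal (‖f (j, m)‖ * ‖ψ (j, m) x‖) ≤
        (∑' m : Fin d → ℤ, ENNReal.ofReal ‖f (j, m)‖ ^ τ) ^ (1 / τ) *
          (ENNReal.ofReal C * K) ^ (1 / τ') := by
    intro j
    have h1 : ∀ m : Fin d → ℤ, ENNReal.ofReal (‖f (j, m)‖ * ‖ψ (j, m) x‖) =
        ENNReal.ofReal ‖f (j, m)‖ * ENNReal.ofReal ‖ψ (j, m) x‖ := fun m =>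
      ENNReal.ofReal_mul (norm_nonneg _)
    have hψsum : ∑' m : Fin d → ℤ, ENNReal.ofReal ‖ψ (j, m) x‖ ^ τ' ≤
        ENNReal.ofReal C * K := by
      calc ∑' m : Fin d → ℤ, ENNReal.ofReal ‖ψ (j, m) x‖ ^ τ'
          ≤ ∑' m : Fin d → ℤ, ENNReal.ofReal C *
              ENNReal.ofReal ((1 + ‖((2:ℝ) ^ j)⁻¹ • x - latticeVec d m‖) ^ (-((d:ℝ) + 1))) := by
            refine ENNReal.tsum_le_tsum fun m => ?_
            rw [ENNReal.ofReal_rpow_of_nonneg (norm_nonneg _) hpq.symm.nonneg,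
              ← ENNReal.ofReal_mul']
            · refine ENNReal.ofReal_le_ofReal ?_
              have := hψ (j, m) x
              rwa [aux_scale j x (latticeVec d m)] at this
            · exact Real.rpow_nonneg (by positivity) _
        _ = ENNReal.ofReal C * ∑' m : Fin d → ℤ,
              ENNReal.ofReal ((1 + ‖((2:ℝ) ^ j)⁻¹ • x - latticeVec d m‖) ^ (-((d:ℝ) + 1))) :=
            ENNReal.tsum_mul_left
        _ ≤ ENNReal.ofReal C * K := by gcongr; exact hKle _
    calc ∑' m : Fin d → ℤ, ENNReal.ofReal (‖f (j, m)‖ * ‖ψ (j, m) x‖)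
        = ∑' m : Fin d → ℤ, ENNReal.ofReal ‖f (j, m)‖ * ENNReal.ofReal ‖ψ (j, m) x‖ := by
          simp_rw [h1]
      _ ≤ (∑' m : Fin d → ℤ, ENNReal.ofReal ‖f (j, m)‖ ^ τ) ^ (1 / τ) *
            (∑' m : Fin d → ℤ, ENNReal.ofReal ‖ψ (j, m) x‖ ^ τ') ^ (1 / τ') :=
          aux_holder _ _ hpq
      _ ≤ (∑' m : Fin d → ℤ, ENNReal.ofReal ‖f (j, m)‖ ^ τ) ^ (1 / τ) *
            (ENNReal.ofReal C * K) ^ (1 / τ') := by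
          exact mul_le_mul_right (ENNReal.rpow_le_rpow hψsum hpq.symm.one_div_nonneg) _
  calc ∑' I : ℤ × (Fin d → ℤ), ENNReal.ofReal (‖f I‖ * ‖ψ I x‖)
      = ∑' (j : ℤ) (m : Fin d → ℤ), ENNReal.ofReal (‖f (j, m)‖ * ‖ψ (j, m) x‖) :=
        ENNReal.tsum_prod'
    _ ≤ ∑' j : ℤ, (∑' m : Fin d → ℤ, ENNReal.ofReal ‖f (j, m)‖ ^ τ) ^ (1 / τ) *
          (ENNReal.ofReal C * K) ^ (1 / τ') := ENNReal.tsum_le_tsum hlevel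
    _ = (ENNReal.ofReal C * K) ^ (1 / τ') *
          ∑' j : ℤ, (∑' m : Fin d → ℤ, ENNReal.ofReal ‖f (j, m)‖ ^ τ) ^ (1 / τ) := by
        rw [ENNReal.tsum_mul_right, mul_comm]
    _ ≤ (ENNReal.ofReal C * K) ^ (1 / τ') * besovNorm d τ q f := by
        gcongr
        exact aux_tsum_rpow_le _ hq0 (hq.trans (min_le_right _ _))
end
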